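/- Let q = 3, m ≥ 2, and n = (3^m − 1)/2. The largest 3-cyclotomic coset leader modulo n is δ_1 = 3^{m−1} − 1 − (3^{⌊(m−1)/2⌋} − 1)/2, and the cardinality of the coset C_{δ_1} equals m if m is odd and m/2 if m is even. -/

import Mathlib

/-- The `q`-cyclotomic coset of `s` modulo `n`. -/
def cosetOf (q n s : ℕ) : Set ℕ := {t | ∃ j : ℕ, t = s * q ^ j % n}

/-- `s` is a coset leader: `s < n` and `s` is the smallest element of its coset. -/
def IsCosetLeader (q n s : ℕ) : Prop := s < n ∧ ∀ j : ℕ, s ≤ s * q ^ j % n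

namespace CLAux

lemma mod2cases (m x : ℕ) (hx : x < 2*m) :
    (x < m ∧ x % m = x) ∨ (m ≤ x ∧ x % m = x - m) := by
  rcases Nat.lt_or_ge x m with h | h
  · exact Or.inl ⟨h, Nat.mod_eq_of_lt h⟩
  · right
    refine ⟨h, ?_⟩
    rw [Nat.mod_eq_sub_mod h]
    exact Nat.mod_eq_of_lt (by omega)

lemma mod_eq_sub_of_dvd {n x c : ℕ} (hc0 : 0 < c) (hcn : c < n) (h : n ∣ x + c) :
    x % n = n - c := by
  have h0 : x + c ≡ 0 [MOD n] := Nat.modEq_zero_iff_dvd.2 h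
  have h1 : (n - c) + c ≡ 0 [MOD n] := by
    have he : (n - c) + c = n := by omega
    rw [he]
    exact Nat.modEq_zero_iff_dvd.2 dvd_rfl
  have h2 : x ≡ n - c [MOD n] := (h0.trans h1.symm).add_right_cancel' c
  calc x % n = (n - c) % n := h2
  _ = n - c := Nat.mod_eq_of_lt (by omega)

lemma dvd_pow_mod (m c : ℕ) : (3^m - 1 : ℤ) ∣ 3^c - 3^(c % m) := by
  have hc : m * (c / m) + c % m = c := Nat.div_add_mod c m
  have h1 : (3:ℤ)^c = ((3^m)^(c/m)) * 3^(c % m) := by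
    rw [← pow_mul, ← pow_add, hc]
  rw [h1]
  have hd : (3^m - 1 : ℤ) ∣ (3^m)^(c/m) - 1 := by
    have := sub_dvd_pow_sub_pow ((3:ℤ)^m) 1 (c/m)
    simpa using this
  calc (3^m - 1 : ℤ) ∣ ((3^m)^(c/m) - 1) * 3^(c % m) := Dvd.dvd.mul_right hd _
  _ = (3^m)^(c/m) * 3^(c % m) - 3^(c % m) := by ring

lemma pow3_add_inj_le : ∀ a b c d : ℕ, a ≤ b → c ≤ d → 3^a + 3^b = 3^c + 3^d →
    a = c ∧ b = d := by
  intro a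
  induction a with
  | zero =>
    intro b c d hab hcd h
    simp only [pow_zero] at h
    have hc : c = 0 := by
      by_contra hc0
      have h1 : 3 ∣ 3^c := dvd_pow_self 3 hc0
      have h2 : 3 ∣ 3^d := dvd_pow_self 3 (by omega)
      rcases Nat.eq_zero_or_pos b with hb | hb
      · subst hb; simp at h; omega
      · have h3 : 3 ∣ 3^b := dvd_pow_self 3 (by omega)
        omega
    subst hc
    simp only [pow_zero] at h
    have hbd : (3:ℕ)^b = 3^d := by omega
    exact ⟨rfl, Nat.pow_right_injective (by norm_num) hbd⟩
  | succ a ih =>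
    intro b c d hab hcd h
    have hc : c ≠ 0 := by
      intro hc0
      subst hc0
      simp only [pow_zero] at h
      have h1 : 3 ∣ 3^(a+1) := dvd_pow_self 3 (by omega)
      have h2 : 3 ∣ 3^b := dvd_pow_self 3 (by omega)
      rcases Nat.eq_zero_or_pos d with hd | hd
      · subst hd; simp at h; omega
      · have h3 : 3 ∣ 3^d := dvd_pow_self 3 (by omega)
        omega
    obtain ⟨B, rfl⟩ : ∃ B, b = B + 1 := ⟨b - 1, by omega⟩
    obtain ⟨C, rfl⟩ : ∃ C, c = C + 1 := ⟨c - 1, by omega⟩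
    obtain ⟨D, rfl⟩ : ∃ D, d = D + 1 := ⟨d - 1, by omega⟩
    simp only [pow_succ] at h
    have h' : 3^a + 3^B = 3^C + 3^D := by omega
    have := ih B C D (by omega) (by omega) h'
    omega

lemma pow3_add_inj {a b c d : ℕ} (h : 3^a + 3^b = 3^c + 3^d) :
    (a = c ∧ b = d) ∨ (a = d ∧ b = c) := by
  rcases le_total a b with hab | hab <;> rcases le_total c d with hcd | hcd
  · exact Or.inl (pow3_add_inj_le a b c d hab hcd h)
  · exact Or.inr (pow3_add_inj_le a b d c hab hcd (by omega))
  · have := pow3_add_inj_le b a c d hab hcd (by omega)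
    exact Or.inr ⟨this.2, this.1⟩
  · have := pow3_add_inj_le b a d c hab hcd (by omega)
    exact Or.inl ⟨this.2, this.1⟩

lemma wrap (m t n : ℕ) (hm : 2 ≤ m) (hn : 2*n+1 = 3^m)
    (x : ℕ) (hx : 2*x < 3^(m-1)+3^t) (hw : n ≤ 3*x) :
    ∃ u, u % 2 = 1 ∧ u < 3^t ∧ 2*(3*x - n) = 3*u + 1 := by
  have h3m : 3^m = 3^(m-1) * 3 := by
    rw [← pow_succ]; congr 1; omega
  have hPodd : 3^(m-1) % 2 = 1 := by simp [Nat.pow_mod]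
  refine ⟨2*x - 3^(m-1), by omega, by omega, by omega⟩

lemma nowrap (m t n : ℕ) (hm : 2 ≤ m) (ht : 2*t ≤ m-1) (hn : 2*n+1 = 3^m)
    (z k w : ℕ) (hz : 2*z < 3^(m-1)+3^t) (h3 : n ≤ 3*z) (he : 2*z = 3^k * w)
    (hw3 : w % 3 = 1) (hw4 : 4 ≤ w) (hwlt : w < 3^(t+1)) : False := by
  have h3m : 3^m = 3^(m-1) * 3 := by rw [← pow_succ]; congr 1; omega
  have hT : 3^t ≤ 3^(m-1) := Nat.pow_le_pow_right (by norm_num) (by omega)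
  have hzP : 3^(m-1) ≤ 2*z := by omega
  have hkm : k ≤ m - 1 := by
    have h1 : 3^k ≤ 3^k * w := Nat.le_mul_of_pos_right _ (by omega)
    have h2 : 3^k < 3^m := by omega
    have := (Nat.pow_lt_pow_iff_right (a := 3) (by norm_num)).1 h2
    omega
  have hdvdP : 3^k ∣ 3^(m-1) := pow_dvd_pow 3 hkm
  have hdvdz : 3^k ∣ 2*z := Dvd.intro w he.symm
  have hdvdv : 3^k ∣ 2*z - 3^(m-1) := Nat.dvd_sub hdvdz hdvdP
  by_cases hv : 2*z - 3^(m-1) = 0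
  · have heq : 3^k * w = 3^(m-1) := by omega
    have hwdvd : w ∣ 3^(m-1) := Dvd.intro_left _ heq
    obtain ⟨i, hi, rfl⟩ := (Nat.dvd_prime_pow Nat.prime_three).1 hwdvd
    rcases Nat.eq_zero_or_pos i with h0 | h0
    · subst h0; simp at hw4
    · have : 3 ∣ 3^i := dvd_pow_self 3 (by omega)
      omega
  · have hkv : 3^k ≤ 2*z - 3^(m-1) := Nat.le_of_dvd (by omega) hdvdv
    have hvT : 2*z - 3^(m-1) < 3^t := by omega
    have hkt : k < t := by
      have hlt : (3:ℕ)^k < 3^t := by omega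
      exact (Nat.pow_lt_pow_iff_right (a := 3) (by norm_num)).1 hlt
    have hsplit : 3^(m-1) = 3^k * 3^(m-1-k) := by
      rw [← pow_add]; congr 1; omega
    have hwge : 3^(m-1-k) ≤ w := by
      have h1 : 3^k * 3^(m-1-k) ≤ 3^k * w := by omega
      exact Nat.le_of_mul_le_mul_left h1 (pow_pos (by norm_num) k)
    have hbig : 3^(t+1) ≤ 3^(m-1-k) := Nat.pow_le_pow_right (by norm_num) (by omega)
    omega

lemma findwrap (n y : ℕ) (h0 : 0 < y) (h1 : y < n) :
    ∃ k, (∀ i, i ≤ k → 3^i * y < n) ∧ n ≤ 3^(k+1) * y := by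
  have hex : ∃ k, n ≤ 3^(k+1) * y := by
    refine ⟨n, ?_⟩
    have h2 : n < 3^n := Nat.lt_pow_self (by norm_num)
    have h3 : 3^n ≤ 3^(n+1) := Nat.pow_le_pow_right (by norm_num) (by omega)
    have h4 : 3^(n+1) ≤ 3^(n+1) * y := Nat.le_mul_of_pos_right _ h0
    omega
  refine ⟨Nat.find hex, ?_, Nat.find_spec hex⟩
  intro i hi
  cases i with
  | zero => simpa using h1
  | succ j =>
    have hj : j < Nat.find hex := by omega
    have := Nat.find_min hex hj
    omega

lemma key (m t n : ℕ) (hm : 2 ≤ m) (ht : 2*t ≤ m-1) (hn : 2*n+1 = 3^m)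
    (w : ℕ) (hw0 : 0 < w) (hwn : w < n)
    (H : ∀ j, 2*(w * 3^j % n) < 3^(m-1)+3^t) : False := by
  have h3m : 3^m = 3^(m-1) * 3 := by rw [← pow_succ]; congr 1; omega
  have h3t : 3^(t+1) = 3^t * 3 := pow_succ 3 t
  have hT : 3^t ≤ 3^(m-1) := Nat.pow_le_pow_right (by norm_num) (by omega)
  have hTm : 3^(t+1) ≤ 3^(m-1) := Nat.pow_le_pow_right (by norm_num) (by omega)
  have h9 : (9:ℕ) ≤ 3^m := by
    calc (9:ℕ) = 3^2 := by norm_num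
    _ ≤ 3^m := Nat.pow_le_pow_right (by norm_num) hm
  have hn4 : 4 ≤ n := by omega
  obtain ⟨k0, hk0a, hk0b⟩ := findwrap n w hw0 hwn
  have hz0lt : 3^k0 * w < n := hk0a k0 le_rfl
  have hz0m : w * 3^k0 % n = 3^k0 * w := by
    rw [mul_comm]; exact Nat.mod_eq_of_lt hz0lt
  have hz0A : 2*(3^k0 * w) < 3^(m-1)+3^t := by
    have := H k0; rwa [hz0m] at this
  have h3z0 : n ≤ 3*(3^k0 * w) := by
    have he : 3^(k0+1) * w = 3 * (3^k0 * w) := by ring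
    omega
  have h3z0' : 3*(3^k0 * w) < 2*n := by omega
  set z0 := 3^k0 * w with hz0def
  have hy : w * 3^(k0+1) % n = 3*z0 - n := by
    have h1 : w * 3^(k0+1) = 3*z0 := by rw [hz0def]; ring
    rw [h1, Nat.mod_eq_sub_mod (by omega)]
    exact Nat.mod_eq_of_lt (by omega)
  obtain ⟨u, hu2, huT, huy⟩ := wrap m t n hm hn z0 hz0A h3z0
  set y := 3*z0 - n with hydef
  have hy0 : 0 < y := by omega
  have hyn : y < n := by omega
  obtain ⟨k1, hk1a, hk1b⟩ := findwrap n y hy0 hyn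
  have hz1lt : 3^k1 * y < n := hk1a k1 le_rfl
  have hz1m : w * 3^(k0+1+k1) % n = 3^k1 * y := by
    have h1 : w * 3^(k0+1+k1) = (w * 3^(k0+1)) * 3^k1 := by rw [pow_add, pow_add]; ring
    rw [h1, ← Nat.mod_mul_mod, hy, mul_comm]
    exact Nat.mod_eq_of_lt hz1lt
  have hz1A : 2*(3^k1 * y) < 3^(m-1)+3^t := by
    have := H (k0+1+k1); rwa [hz1m] at this
  have h3z1 : n ≤ 3*(3^k1 * y) := by
    have he : 3^(k1+1) * y = 3 * (3^k1 * y) := by ring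
    omega
  exact nowrap m t n hm ht hn (3^k1 * y) k1 (2*y) hz1A h3z1 (by ring)
    (by omega) (by omega) (by omega)

lemma maxc (m t a b : ℕ) (hm : 2 ≤ m) (ht : 2*t ≤ m-1 ∧ m-1 ≤ 2*t+1)
    (ha : a < m) (hb : b < m) (hrel : b = (a+t+1) % m) :
    3^a + 3^b ≤ 3^(m-1) + 3^t := by
  have htm : t ≤ m-2 := by omega
  have hcases := mod2cases m (a+t+1) (by omega)
  by_cases hbm : b = m-1
  · subst hbm
    have h3a : (3:ℕ)^a ≤ 3^t := Nat.pow_le_pow_right (by norm_num) (by omega)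
    omega
  · by_cases ham : a = m-1
    · subst ham
      have hbval : b = t := by omega
      subst hbval
      omega
    · have h1 : (3:ℕ)^a ≤ 3^(m-2) := Nat.pow_le_pow_right (by norm_num) (by omega)
      have h2 : (3:ℕ)^b ≤ 3^(m-2) := Nat.pow_le_pow_right (by norm_num) (by omega)
      have h3 : (3:ℕ)^(m-1) = 3^(m-2) * 3 := by rw [← pow_succ]; congr 1; omega
      have h4 : (0:ℕ) < 3^t := pow_pos (by norm_num) t
      omega

lemma form (m t n δ1 : ℕ) (hm : 2 ≤ m) (ht : 2*t ≤ m-1 ∧ m-1 ≤ 2*t+1)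
    (hn : 2*n+1 = 3^m) (hδ : 2*δ1 + 3^(m-1) + 3^t = 2*n) (j : ℕ) :
    ∃ c, 2*c = 3^((m-1+j) % m) + 3^((t+j) % m) ∧ 0 < c ∧ c < n ∧
      2*c ≤ 3^(m-1) + 3^t ∧ δ1 * 3^j % n = n - c := by
  have hm0 : 0 < m := by omega
  set a := (m-1+j) % m with hadef
  set b := (t+j) % m with hbdef
  have ha : a < m := Nat.mod_lt _ hm0
  have hb : b < m := Nat.mod_lt _ hm0
  have h3m : 3^m = 3^(m-1) * 3 := by rw [← pow_succ]; congr 1; omega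
  have haodd : 3^a % 2 = 1 := by simp [Nat.pow_mod]
  have hbodd : 3^b % 2 = 1 := by simp [Nat.pow_mod]
  have hT : 3^t ≤ 3^(m-1) := Nat.pow_le_pow_right (by norm_num) (by omega)
  have hrel : b = (a+t+1) % m := by
    rw [hadef, hbdef]
    have h1 : (m-1+j) % m + t + 1 = (m-1+j) % m + (t+1) := by omega
    rw [h1, Nat.mod_add_mod]
    have h2 : m-1+j+(t+1) = m + (t+j) := by omega
    rw [h2, Nat.add_mod_left]
  have hmax : 3^a + 3^b ≤ 3^(m-1) + 3^t := maxc m t a b hm ht ha hb hrel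
  have hP3 : (3:ℕ) ≤ 3^(m-1) := by
    calc (3:ℕ) = 3^1 := by norm_num
    _ ≤ 3^(m-1) := Nat.pow_le_pow_right (by norm_num) (by omega)
  have hapos : (0:ℕ) < 3^a := pow_pos (by norm_num) a
  have hbpos : (0:ℕ) < 3^b := pow_pos (by norm_num) b
  refine ⟨(3^a + 3^b)/2, by omega, by omega, by omega, by omega, ?_⟩
  set c := (3^a + 3^b)/2 with hcdef
  have h2c : 2*c = 3^a + 3^b := by omega
  -- divisibility over ℤ
  have hd1 : (3^m - 1 : ℤ) ∣ 3^(m-1+j) - 3^a := dvd_pow_mod m (m-1+j)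
  have hd2 : (3^m - 1 : ℤ) ∣ 3^(t+j) - 3^b := dvd_pow_mod m (t+j)
  have hdn : ((3:ℤ)^m - 1) = 2*(n:ℤ) := by
    have hcast := hn
    zify at hcast
    linarith
  have e1 : (2*(δ1:ℤ)) = 2*(n:ℤ) - 3^(m-1) - 3^t := by
    have hcast := hδ
    zify at hcast
    linarith
  have e2 : (2*(c:ℤ)) = 3^a + 3^b := by
    have hcast := h2c
    zify at hcast
    linarith
  have hX : (2:ℤ) * ((δ1:ℤ) * 3^j + (c:ℤ)) =
      (2*(n:ℤ))*3^j - (3^(m-1+j) - 3^a) - (3^(t+j) - 3^b) := by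
    rw [pow_add, pow_add]
    linear_combination (3:ℤ)^j * e1 + e2
  have hdvd2 : (2*(n:ℤ)) ∣ 2 * ((δ1:ℤ) * 3^j + (c:ℤ)) := by
    rw [hX, ← hdn]
    exact dvd_sub (dvd_sub (hdn ▸ Dvd.intro _ rfl) hd1) hd2
  have hdvd1 : (n:ℤ) ∣ ((δ1:ℤ) * 3^j + (c:ℤ)) := by
    obtain ⟨k, hk⟩ := hdvd2
    exact ⟨k, by linarith⟩
  have hdvdnat : n ∣ δ1 * 3^j + c := by
    have hcast : ((δ1 * 3^j + c : ℕ) : ℤ) = (δ1:ℤ) * 3^j + (c:ℤ) := by push_cast; ring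
    exact_mod_cast (hcast ▸ hdvd1 : (n:ℤ) ∣ ((δ1 * 3^j + c : ℕ) : ℤ))
  exact mod_eq_sub_of_dvd (by omega) (by omega) hdvdnat

lemma inj (m t N0 : ℕ) (hm : 2 ≤ m)
    (hN : (N0 = m ∧ m = 2*t+1) ∨ (2*N0 = m ∧ m = 2*t+2))
    (j j' : ℕ) (hj : j < N0) (hj' : j' < N0)
    (h : 3^((m-1+j) % m) + 3^((t+j) % m) = 3^((m-1+j') % m) + 3^((t+j') % m)) :
    j = j' := by
  have htm : t < m := by omega
  have hjm : j < m := by omega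
  have hjm' : j' < m := by omega
  rcases pow3_add_inj h with ⟨h1, h2⟩ | ⟨h1, h2⟩
  · rcases mod2cases m (m-1+j) (by omega) with ⟨ha1, ha⟩ | ⟨ha1, ha⟩ <;>
      rcases mod2cases m (m-1+j') (by omega) with ⟨hb1, hb⟩ | ⟨hb1, hb⟩ <;> omega
  · rcases hN with ⟨hN1, hN2⟩ | ⟨hN1, hN2⟩ <;>
      rcases mod2cases m (m-1+j) (by omega) with ⟨ha1, ha⟩ | ⟨ha1, ha⟩ <;>
      rcases mod2cases m (t+j') (by omega) with ⟨hb1, hb⟩ | ⟨hb1, hb⟩ <;>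
      rcases mod2cases m (t+j) (by omega) with ⟨hc1, hc⟩ | ⟨hc1, hc⟩ <;>
      rcases mod2cases m (m-1+j') (by omega) with ⟨hd1, hd⟩ | ⟨hd1, hd⟩ <;> omega

lemma period (n δ1 N0 : ℕ) (hstep : δ1 * 3^N0 % n = δ1) :
    ∀ q r, δ1 * 3^(N0*q + r) % n = δ1 * 3^r % n := by
  intro q
  induction q with
  | zero => intro r; simp
  | succ p ih =>
    intro r
    have he : N0*(p+1) + r = N0 + (N0*p + r) := by ring
    rw [he, pow_add, ← mul_assoc, ← Nat.mod_mul_mod, hstep]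
    exact ih r

end CLAux

open CLAux in
theorem stmt2 (m n : ℕ) (hm : 2 ≤ m) (hn : n = (3 ^ m - 1) / 2)
    (δ1 : ℕ) (hδ1 : δ1 = 3 ^ (m - 1) - 1 - (3 ^ ((m - 1) / 2) - 1) / 2) :
    IsGreatest {s : ℕ | IsCosetLeader 3 n s} δ1 ∧
      Set.ncard (cosetOf 3 n δ1) = (if Odd m then m else m / 2) := by
  set t := (m-1)/2 with htdef
  have h3m : (3:ℕ)^m = 3^(m-1) * 3 := by rw [← pow_succ]; congr 1; omega
  have hTodd : (3:ℕ)^t % 2 = 1 := by simp [Nat.pow_mod]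
  have hPodd : (3:ℕ)^(m-1) % 2 = 1 := by simp [Nat.pow_mod]
  have h3modd : (3:ℕ)^m % 2 = 1 := by simp [Nat.pow_mod]
  have hT : (3:ℕ)^t ≤ 3^(m-1) := Nat.pow_le_pow_right (by norm_num) (by omega)
  have hTpos : (0:ℕ) < 3^t := pow_pos (by norm_num) t
  have hPpos : (0:ℕ) < 3^(m-1) := pow_pos (by norm_num) _
  have h9 : (9:ℕ) ≤ 3^m := by
    calc (9:ℕ) = 3^2 := by norm_num
    _ ≤ 3^m := Nat.pow_le_pow_right (by norm_num) hm
  have hn' : 2*n+1 = 3^m := by omega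
  have ht2 : 2*t ≤ m-1 ∧ m-1 ≤ 2*t+1 := by omega
  have hδ : 2*δ1 + 3^(m-1) + 3^t = 2*n := by omega
  have hδlt : δ1 < n := by omega
  have hn0 : 0 < n := by omega
  -- δ1 is a coset leader
  have hlead : IsCosetLeader 3 n δ1 := by
    refine ⟨hδlt, fun j => ?_⟩
    obtain ⟨c, h2c, hc0, hcn, hcle, hmod⟩ := form m t n δ1 hm ht2 hn' hδ j
    rw [hmod]; omega
  -- upper bound
  have hub : ∀ s ∈ {s : ℕ | IsCosetLeader 3 n s}, s ≤ δ1 := by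
    intro s hs
    obtain ⟨hsn, hsle⟩ := hs
    by_contra hgt
    push_neg at hgt
    have hs1 : 1 ≤ s := by omega
    have hcop : Nat.Coprime n 3 := by
      have h3n : ¬ (3 ∣ n) := by
        intro hd
        have h31 : (3:ℕ) ∣ 3^m := dvd_pow_self 3 (by omega)
        omega
      exact Nat.coprime_comm.1 ((Nat.prime_three.coprime_iff_not_dvd).2 h3n)
    set e := n - s with hedef
    have he0 : 0 < e := by omega
    have hen : e < n := by omega
    have H : ∀ j, 2*(e * 3^j % n) < 3^(m-1)+3^t := by
      intro j
      by_contra hH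
      push_neg at hH
      have hne : e * 3^j % n ≠ 0 := by
        intro h0
        have hd : n ∣ e * 3^j := Nat.dvd_of_mod_eq_zero h0
        have hd2 : n ∣ e := (hcop.pow_right j).dvd_of_dvd_mul_right hd
        have := Nat.le_of_dvd he0 hd2
        omega
      have hdvd : n ∣ s * 3^j + e * 3^j % n := by
        apply Nat.dvd_of_mod_eq_zero
        rw [Nat.add_mod_mod]
        have he1 : s * 3^j + e * 3^j = n * 3^j := by
          rw [← Nat.add_mul]; congr 1; omega
        rw [he1, Nat.mul_mod_right]
      have hmlt : e * 3^j % n < n := Nat.mod_lt _ hn0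
      have heq : s * 3^j % n = n - e * 3^j % n :=
        mod_eq_sub_of_dvd (by omega) hmlt hdvd
      have := hsle j
      omega
    exact key m t n hm ht2.1 hn' e he0 hen H
  -- cardinality of the coset
  set N0 := if Odd m then m else m/2 with hN0def
  have hNcase : (N0 = m ∧ m = 2*t+1) ∨ (2*N0 = m ∧ m = 2*t+2) := by
    by_cases hodd : Odd m
    · have hm2 : m % 2 = 1 := Nat.odd_iff.1 hodd
      left
      constructor
      · rw [hN0def, if_pos hodd]
      · omega
    · have hm2 : m % 2 = 0 := by
        have := Nat.odd_iff.not.1 hodd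
        omega
      right
      constructor
      · rw [hN0def, if_neg hodd]; omega
      · omega
  have hN0pos : 0 < N0 := by omega
  have hN0m : N0 ≤ m := by omega
  have hstep : δ1 * 3^N0 % n = δ1 := by
    rcases hNcase with ⟨h1, _⟩ | ⟨h1, h2⟩
    · rw [h1]
      have he : δ1 * 3^m = δ1 + (2*δ1) * n := by
        rw [← hn']; ring
      rw [he, Nat.add_mul_mod_self_right]
      exact Nat.mod_eq_of_lt hδlt
    · obtain ⟨c, h2c, hc0, hcn, hcle, hmod⟩ := form m t n δ1 hm ht2 hn' hδ N0
      have ha : (m-1+N0) % m = t := by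
        rcases mod2cases m (m-1+N0) (by omega) with ⟨h1', h⟩ | ⟨h1', h⟩ <;> omega
      have hb : (t+N0) % m = m-1 := by
        rcases mod2cases m (t+N0) (by omega) with ⟨h1', h⟩ | ⟨h1', h⟩ <;> omega
      rw [ha, hb] at h2c
      rw [hmod]
      omega
  have hper : ∀ j, δ1 * 3^j % n = δ1 * 3^(j % N0) % n := by
    intro j
    conv_lhs => rw [← Nat.div_add_mod j N0, mul_comm N0 (j / N0)]
    rw [show j / N0 * N0 = N0 * (j / N0) by ring]
    exact period n δ1 N0 hstep (j / N0) (j % N0)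
  have hset : cosetOf 3 n δ1 = ↑((Finset.range N0).image (fun j => δ1 * 3^j % n)) := by
    ext x
    simp only [cosetOf, Set.mem_setOf_eq, Finset.coe_image, Finset.coe_range,
      Set.mem_image, Set.mem_Iio]
    constructor
    · rintro ⟨j, rfl⟩
      exact ⟨j % N0, Nat.mod_lt _ hN0pos, (hper j).symm⟩
    · rintro ⟨j, _, rfl⟩
      exact ⟨j, rfl⟩
  refine ⟨⟨hlead, hub⟩, ?_⟩
  rw [hset, Set.ncard_coe_finset]
  rw [Finset.card_image_of_injOn, Finset.card_range]
  intro j hj j' hj' heq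
  simp only [Finset.coe_range, Set.mem_Iio] at hj hj'
  have heq' : δ1 * 3^j % n = δ1 * 3^j' % n := heq
  obtain ⟨c, h2c, hc0, hcn, hcle, hmod⟩ := form m t n δ1 hm ht2 hn' hδ j
  obtain ⟨c', h2c', hc0', hcn', hcle', hmod'⟩ := form m t n δ1 hm ht2 hn' hδ j'
  rw [hmod, hmod'] at heq'
  have hcc : c = c' := by omega
  have hsum : 3^((m-1+j) % m) + 3^((t+j) % m) = 3^((m-1+j') % m) + 3^((t+j') % m) := by
    omega
  exact inj m t N0 hm hNcase j j' hj hj' hsum
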